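/- Fix L ≥ 1 and α ∈ (0,1). For each m, let p_1,...,p_m be independent random variables all supported on the grid {1/L,...,L/L}, with p_i ~ Uniform{1/L,...,L/L} whenever the i-th null is true; let m_0(m) be the number of true nulls. Suppose that as m → ∞ the average probability mass function f̄_m converges pointwise on the grid to a limiting pmf f*, that m_0(m)/m → π*_0 ∈ (0,1), and that the map ℓ ↦ α Σ_{k=0}^{ℓ} f*(k/L) − ℓ/L (with f*(0) := 0) has a unique maximizer ℓ* over ℓ ∈ {0,...,L}. Let R_α := argmax_{k ∈ {0,...,m}} (αk/m − p_(k)) with ties broken uniformly at random, and let bFDR(R_α) := P(R_α ≥ 1 and the p-value of rank R_α belongs to a true null). Then lim_{m→∞} bFDR(R_α) = (π*_0 / (L f*(ℓ*/L))) · 1{ℓ* > 0}. -/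

import Mathlib

open MeasureTheory ProbabilityTheory Filter Set

/-- The `k`-th order statistic of the values `v 0, ..., v (m-1)`. -/
noncomputable def orderStat {m : ℕ} (v : Fin m → ℝ) (k : ℕ) : ℝ :=
  if k = 0 then 0
  else sInf {x : ℝ | k ≤ (Finset.univ.filter (fun i => v i ≤ x)).card}

/-- The support-line objective `k ↦ α k / m − p_(k)`. -/
noncomputable def slObj (α : ℝ) {m : ℕ} (v : Fin m → ℝ) (k : ℕ) : ℝ :=
  α * (k : ℝ) / (m : ℝ) - orderStat v k

/-- The number of rejections `R_α` of the support-line procedure at level `α`. -/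
noncomputable def slR (α : ℝ) {m : ℕ} (v : Fin m → ℝ) : ℕ :=
  sSup {k : ℕ | k ≤ m ∧ ∀ j ≤ m, slObj α v j ≤ slObj α v k}

/-- The rejection threshold `τ̂_α = p_(R_α)` of the support-line procedure. -/
noncomputable def slTau (α : ℝ) {m : ℕ} (v : Fin m → ℝ) : ℝ :=
  orderStat v (slR α v)

/-- The boundary FDR of the support-line procedure with ties among equal p-values
broken uniformly at random: the expectation of
`1{R_α ≥ 1} · #{nulls at the threshold} / #{p-values at the threshold}`. -/
noncomputable def bFDRsl {Ω : Type} [MeasurableSpace Ω] (μ : Measure Ω)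
    {m : ℕ} (p : Fin m → Ω → ℝ) (H0 : Finset (Fin m)) (α : ℝ) : ℝ :=
  ∫ ω, (if 1 ≤ slR α (fun i => p i ω) then
      ({i : Fin m | i ∈ H0 ∧ p i ω = slTau α (fun i => p i ω)}.ncard : ℝ)
        / ({i : Fin m | p i ω = slTau α (fun i => p i ω)}.ncard : ℝ)
    else 0) ∂μ

namespace Stmt13

/-- count of values `≤ ℓ/L` -/
noncomputable def CntF (L : ℕ) {m : ℕ} (v : Fin m → ℝ) (ℓ : ℕ) : ℕ :=
  (Finset.univ.filter (fun i => v i ≤ (ℓ : ℝ) / L)).card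

/-- count of values `= ℓ/L` -/
noncomputable def NlF (L : ℕ) {m : ℕ} (v : Fin m → ℝ) (ℓ : ℕ) : ℕ :=
  (Finset.univ.filter (fun i => v i = (ℓ : ℝ) / L)).card

variable {L m : ℕ} {v : Fin m → ℝ}

def Grid (L : ℕ) {m : ℕ} (v : Fin m → ℝ) : Prop :=
  ∀ i, ∃ ℓ : ℕ, 1 ≤ ℓ ∧ ℓ ≤ L ∧ v i = (ℓ : ℝ) / L

lemma hLpos (hL : 1 ≤ L) : (0:ℝ) < L := by exact_mod_cast Nat.pos_of_ne_zero (by omega)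

lemma div_le_div_nat (hL : 1 ≤ L) {a b : ℕ} : (a:ℝ)/L ≤ (b:ℝ)/L ↔ a ≤ b := by
  rw [div_le_div_iff_of_pos_right (hLpos hL)]
  exact_mod_cast Iff.rfl

lemma div_eq_div_nat (hL : 1 ≤ L) {a b : ℕ} : (a:ℝ)/L = (b:ℝ)/L ↔ a = b := by
  rw [div_eq_div_iff (ne_of_gt (hLpos hL)) (ne_of_gt (hLpos hL))]
  constructor
  · intro h
    have : (a:ℝ) = b := mul_right_cancel₀ (ne_of_gt (hLpos hL)) h
    exact_mod_cast this
  · rintro rfl; rfl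

lemma Cnt_zero (hL : 1 ≤ L) (hv : Grid L v) : CntF L v 0 = 0 := by
  unfold CntF
  rw [Finset.card_eq_zero, Finset.filter_eq_empty_iff]
  intro i _
  obtain ⟨ℓ, h1, h2, h3⟩ := hv i
  have : (0:ℝ) < (ℓ:ℝ)/L := by positivity
  rw [h3]; push_cast; simp only [zero_div]; linarith

lemma Cnt_le (hL : 1 ≤ L) : CntF L v ℓ ≤ m := by
  classical
  calc CntF L v ℓ ≤ Finset.univ.card := Finset.card_filter_le _ _
  _ = m := by simp

lemma Cnt_top (hL : 1 ≤ L) (hv : Grid L v) : CntF L v L = m := by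
  unfold CntF
  rw [Finset.filter_true_of_mem, Finset.card_univ, Fintype.card_fin]
  intro i _
  obtain ⟨ℓ, h1, h2, h3⟩ := hv i
  rw [h3]; exact (div_le_div_nat hL).2 h2

lemma Cnt_succ (hL : 1 ≤ L) (hv : Grid L v) (ℓ : ℕ) :
    CntF L v (ℓ+1) = CntF L v ℓ + NlF L v (ℓ+1) := by
  classical
  unfold CntF NlF
  rw [← Finset.card_union_of_disjoint ?hd, ← Finset.filter_or]
  case hd =>
    rw [Finset.disjoint_filter]
    intro i _ hle heq
    rw [heq] at hle
    have : ℓ + 1 ≤ ℓ := (div_le_div_nat hL).1 hle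
    omega
  apply congrArg Finset.card
  apply Finset.filter_congr
  intro i _
  constructor
  · intro hi
    obtain ⟨j, hj1, hj2, hj3⟩ := hv i
    rw [hj3] at hi ⊢
    have : j ≤ ℓ + 1 := (div_le_div_nat hL).1 hi
    rcases Nat.lt_or_ge j (ℓ+1) with h | h
    · exact Or.inl ((div_le_div_nat hL).2 (by omega))
    · exact Or.inr ((div_eq_div_nat hL).2 (by omega))
  · intro hi
    rcases hi with h | h
    · exact le_trans h ((div_le_div_nat hL).2 (by omega))
    · rw [h]

lemma Cnt_eq_sum (hL : 1 ≤ L) (hv : Grid L v) (ℓ : ℕ) :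
    CntF L v ℓ = ∑ k ∈ Finset.Icc 1 ℓ, NlF L v k := by
  induction ℓ with
  | zero => simpa using Cnt_zero hL hv
  | succ n ih =>
      rw [Cnt_succ hL hv, ih, ← Finset.sum_Icc_succ_top (by omega)]

lemma orderStat_grid (hL : 1 ≤ L) (hv : Grid L v) {k ℓ : ℕ} (hℓ1 : 1 ≤ ℓ)
    (h0 : CntF L v (ℓ-1) < k) (h1 : k ≤ CntF L v ℓ) :
    orderStat v k = (ℓ : ℝ)/L := by
  have hk0 : k ≠ 0 := by omega
  rw [orderStat, if_neg hk0]
  apply IsLeast.csInf_eq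
  constructor
  · exact h1
  · intro x hx
    by_contra hlt
    push_neg at hlt
    have hsub : (Finset.univ.filter (fun i => v i ≤ x)) ⊆
        (Finset.univ.filter (fun i => v i ≤ ((ℓ-1 : ℕ) : ℝ)/L)) := by
      intro i hi
      simp only [Finset.mem_filter, Finset.mem_univ, true_and] at hi ⊢
      obtain ⟨j, hj1, hj2, hj3⟩ := hv i
      rw [hj3] at hi ⊢
      have hjl : (j:ℝ)/L < (ℓ:ℝ)/L := lt_of_le_of_lt hi hlt
      have : j < ℓ := by
        by_contra hge
        push_neg at hge
        exact absurd ((div_le_div_nat hL).2 hge) (not_le.2 hjl)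
      exact (div_le_div_nat hL).2 (by omega)
    have : k ≤ CntF L v (ℓ-1) := le_trans hx (Finset.card_le_card hsub)
    omega

lemma exists_level (hL : 1 ≤ L) (hv : Grid L v) {k : ℕ} (hk1 : 1 ≤ k) (hkm : k ≤ m) :
    ∃ ℓ, 1 ≤ ℓ ∧ ℓ ≤ L ∧ CntF L v (ℓ-1) < k ∧ k ≤ CntF L v ℓ := by
  have hPL : ∃ ℓ, k ≤ CntF L v ℓ := ⟨L, by rw [Cnt_top hL hv]; exact hkm⟩
  classical
  refine ⟨Nat.find hPL, ?_, ?_, ?_, Nat.find_spec hPL⟩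
  · rcases Nat.eq_zero_or_pos (Nat.find hPL) with h | h
    · exfalso
      have := Nat.find_spec hPL
      rw [h, Cnt_zero hL hv] at this
      omega
    · omega
  · exact Nat.find_min' hPL (by rw [Cnt_top hL hv]; exact hkm)
  · have h1 : 1 ≤ Nat.find hPL := by
      rcases Nat.eq_zero_or_pos (Nat.find hPL) with h | h
      · exfalso
        have := Nat.find_spec hPL
        rw [h, Cnt_zero hL hv] at this
        omega
      · omega
    have := Nat.find_min hPL (m := Nat.find hPL - 1) (by omega)
    omega

end Stmt13

namespace Stmt13Part2
open Stmt13

variable {L m : ℕ} {v : Fin m → ℝ} {α : ℝ}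

/-- empirical support-line objective at level ℓ -/
noncomputable def gv (α : ℝ) (L : ℕ) {m : ℕ} (v : Fin m → ℝ) (ℓ : ℕ) : ℝ :=
  α * (CntF L v ℓ : ℝ) / m - (ℓ : ℝ) / L

lemma orderStat_zero : orderStat v 0 = 0 := by simp [orderStat]

lemma slObj_zero : slObj α v 0 = 0 := by simp [slObj, orderStat_zero]

lemma slObj_Cnt (hL : 1 ≤ L) (hv : Grid L v) {ℓh : ℕ}
    (hmass : ℓh = 0 ∨ (1 ≤ ℓh ∧ CntF L v (ℓh - 1) < CntF L v ℓh)) :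
    slObj α v (CntF L v ℓh) = gv α L v ℓh := by
  rcases hmass with h | ⟨h1, h2⟩
  · subst h
    rw [Cnt_zero hL hv, slObj_zero, gv, Cnt_zero hL hv]
    simp
  · rw [slObj, gv, orderStat_grid hL hv h1 h2 le_rfl]

lemma slObj_lt_of_ne (hL : 1 ≤ L) (hv : Grid L v) (hα : 0 < α) (hm : 1 ≤ m)
    {ℓh : ℕ} (hℓh : ℓh ≤ L)
    (hmass : ℓh = 0 ∨ (1 ≤ ℓh ∧ CntF L v (ℓh - 1) < CntF L v ℓh))
    (hmax : ∀ ℓ ≤ L, ℓ ≠ ℓh → gv α L v ℓ < gv α L v ℓh) :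
    ∀ j ≤ m, j ≠ CntF L v ℓh → slObj α v j < gv α L v ℓh := by
  intro j hj hne
  have hmpos : (0:ℝ) < m := by exact_mod_cast Nat.pos_of_ne_zero (by omega)
  rcases Nat.eq_zero_or_pos j with hj0 | hj1
  · subst hj0
    have hℓh0 : ℓh ≠ 0 := by
      intro h
      subst h
      rw [Cnt_zero hL hv] at hne
      exact hne rfl
    have := hmax 0 (by omega) (Ne.symm hℓh0)
    rw [gv, Cnt_zero hL hv] at this
    simpa [slObj_zero] using this
  · obtain ⟨ℓ, hℓ1, hℓL, hc0, hc1⟩ := exists_level hL hv hj1 hj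
    have hobj : slObj α v j = α * (j:ℝ)/m - (ℓ:ℝ)/L := by
      rw [slObj, orderStat_grid hL hv hℓ1 hc0 hc1]
    by_cases heq : ℓ = ℓh
    · subst heq
      have hjlt : j < CntF L v ℓ := lt_of_le_of_ne hc1 hne
      have : α * (j:ℝ)/m < α * (CntF L v ℓ : ℝ)/m := by
        apply div_lt_div_of_pos_right ?_ hmpos
        have : (j:ℝ) < CntF L v ℓ := by exact_mod_cast hjlt
        nlinarith
      rw [hobj, gv]
      linarith
    · have hle : slObj α v j ≤ gv α L v ℓ := by
        rw [hobj, gv]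
        have hjc : (j:ℝ) ≤ CntF L v ℓ := by exact_mod_cast hc1
        have : α * (j:ℝ)/m ≤ α * (CntF L v ℓ : ℝ)/m := by
          gcongr
        linarith
      exact lt_of_le_of_lt hle (hmax ℓ hℓL heq)

end Stmt13Part2

namespace Stmt13Part3
open Stmt13 Stmt13Part2

variable {L m : ℕ} {v : Fin m → ℝ} {α : ℝ}

theorem slR_eq (hL : 1 ≤ L) (hv : Grid L v) (hα : 0 < α) (hm : 1 ≤ m)
    {ℓh : ℕ} (hℓh : ℓh ≤ L)
    (hmass : ℓh = 0 ∨ (1 ≤ ℓh ∧ CntF L v (ℓh - 1) < CntF L v ℓh))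
    (hmax : ∀ ℓ ≤ L, ℓ ≠ ℓh → gv α L v ℓ < gv α L v ℓh) :
    slR α v = CntF L v ℓh := by
  have hobjC : slObj α v (CntF L v ℓh) = gv α L v ℓh := slObj_Cnt hL hv hmass
  have hCle : CntF L v ℓh ≤ m := Cnt_le hL
  have hlt := slObj_lt_of_ne hL hv hα hm hℓh hmass hmax
  have hle : ∀ j ≤ m, slObj α v j ≤ slObj α v (CntF L v ℓh) := by
    intro j hj
    by_cases h : j = CntF L v ℓh
    · rw [h]
    · rw [hobjC]; exact le_of_lt (hlt j hj h)
  have hset : {k : ℕ | k ≤ m ∧ ∀ j ≤ m, slObj α v j ≤ slObj α v k} = {CntF L v ℓh} := by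
    ext k
    simp only [Set.mem_setOf_eq, Set.mem_singleton_iff]
    constructor
    · rintro ⟨hkm, hk⟩
      by_contra hne
      have h1 : slObj α v (CntF L v ℓh) ≤ slObj α v k := hk _ hCle
      have h2 : slObj α v k < gv α L v ℓh := hlt k hkm hne
      rw [hobjC] at h1
      linarith
    · rintro rfl
      exact ⟨hCle, hle⟩
  rw [slR, hset, csSup_singleton]

theorem slTau_eq (hL : 1 ≤ L) (hv : Grid L v) (hα : 0 < α) (hm : 1 ≤ m)
    {ℓh : ℕ} (hℓh : ℓh ≤ L) (h1 : 1 ≤ ℓh) (h2 : CntF L v (ℓh - 1) < CntF L v ℓh)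
    (hmax : ∀ ℓ ≤ L, ℓ ≠ ℓh → gv α L v ℓ < gv α L v ℓh) :
    slTau α v = (ℓh : ℝ)/L := by
  rw [slTau, slR_eq hL hv hα hm hℓh (Or.inr ⟨h1, h2⟩) hmax,
    orderStat_grid hL hv h1 h2 le_rfl]

end Stmt13Part3

namespace Stmt13Part4
open Stmt13 Stmt13Part2 Stmt13Part3

variable {L m : ℕ} {v : Fin m → ℝ} {α δ : ℝ} {fstar : ℝ → ℝ}

lemma Cnt_close (hL : 1 ≤ L) (hv : Grid L v) (hδ : 0 ≤ δ)
    (hdev : ∀ ℓ : ℕ, 1 ≤ ℓ → ℓ ≤ L → |(NlF L v ℓ : ℝ)/m - fstar ((ℓ:ℝ)/L)| < δ) :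
    ∀ ℓ ≤ L, |(CntF L v ℓ : ℝ)/m - ∑ k ∈ Finset.Icc 1 ℓ, fstar ((k:ℝ)/L)| ≤ L * δ := by
  intro ℓ hℓ
  rw [Cnt_eq_sum hL hv]
  push_cast
  rw [Finset.sum_div, ← Finset.sum_sub_distrib]
  calc |∑ k ∈ Finset.Icc 1 ℓ, ((NlF L v k : ℝ)/m - fstar ((k:ℝ)/L))|
      ≤ ∑ k ∈ Finset.Icc 1 ℓ, |(NlF L v k : ℝ)/m - fstar ((k:ℝ)/L)| :=
        Finset.abs_sum_le_sum_abs _ _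
    _ ≤ ∑ _k ∈ Finset.Icc 1 ℓ, δ := by
        apply Finset.sum_le_sum
        intro k hk
        rw [Finset.mem_Icc] at hk
        exact le_of_lt (hdev k hk.1 (le_trans hk.2 hℓ))
    _ = (ℓ : ℝ) * δ := by
        rw [Finset.sum_const, Nat.card_Icc]
        simp [nsmul_eq_mul]
    _ ≤ (L : ℝ) * δ := by
        have : (ℓ:ℝ) ≤ L := by exact_mod_cast hℓ
        nlinarith

lemma gv_lt_of_close (hα : 0 < α) {ℓ ℓh : ℕ} {s : ℕ → ℝ}
    (h1 : |(CntF L v ℓ : ℝ)/m - s ℓ| ≤ L * δ)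
    (h2 : |(CntF L v ℓh : ℝ)/m - s ℓh| ≤ L * δ)
    (hG : α * s ℓ - (ℓ:ℝ)/L + 2*(α*((L:ℝ)*δ)) < α * s ℓh - (ℓh:ℝ)/L) :
    gv α L v ℓ < gv α L v ℓh := by
  rw [gv, gv]
  have e1 : α * (CntF L v ℓ : ℝ)/m - α * s ℓ = α * ((CntF L v ℓ : ℝ)/m - s ℓ) := by ring
  have e2 : α * (CntF L v ℓh : ℝ)/m - α * s ℓh = α * ((CntF L v ℓh : ℝ)/m - s ℓh) := by
    ring
  have b1 : |α * ((CntF L v ℓ : ℝ)/m - s ℓ)| ≤ α * ((L:ℝ)*δ) := by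
    rw [abs_mul, abs_of_pos hα]
    exact mul_le_mul_of_nonneg_left h1 (le_of_lt hα)
  have b2 : |α * ((CntF L v ℓh : ℝ)/m - s ℓh)| ≤ α * ((L:ℝ)*δ) := by
    rw [abs_mul, abs_of_pos hα]
    exact mul_le_mul_of_nonneg_left h2 (le_of_lt hα)
  rw [abs_le] at b1 b2
  linarith [b1.1, b1.2, b2.1, b2.2, e1, e2]

end Stmt13Part4

namespace Stmt13Prob
open Stmt13

variable {Ω : Type} [MeasurableSpace Ω] (μ : Measure Ω) [IsProbabilityMeasure μ]

lemma variance_indicator_le_one {A : Set Ω} (hA : MeasurableSet A) :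
    variance (A.indicator (fun _ => (1:ℝ))) μ ≤ 1 := by
  have hm2 : MemLp (A.indicator (fun _ => (1:ℝ))) 2 μ :=
    memLp_indicator_const 2 hA 1 (Or.inr (measure_ne_top μ _))
  rw [variance_eq_sub hm2]
  have hsq : (A.indicator (fun _ => (1:ℝ)))^2 = A.indicator (fun _ => (1:ℝ)) := by
    funext ω
    classical
    rw [Pi.pow_apply, Set.indicator_apply]
    split_ifs <;> norm_num
  have hint : ∫ ω, A.indicator (fun _ => (1:ℝ)) ω ∂μ = (μ A).toReal := by
    exact integral_indicator_one (μ := μ) hA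
  have h0 : (0:ℝ) ≤ (μ A).toReal := ENNReal.toReal_nonneg
  have h1 : (μ A).toReal ≤ 1 := by
    have := prob_le_one (μ := μ) (s := A)
    calc (μ A).toReal ≤ (1 : ENNReal).toReal := ENNReal.toReal_mono ENNReal.one_ne_top this
    _ = 1 := by simp
  rw [hsq, hint]
  nlinarith

lemma integral_indicator_one' {A : Set Ω} (hA : MeasurableSet A) :
    ∫ ω, A.indicator (fun _ => (1:ℝ)) ω ∂μ = (μ A).toReal := by
  exact integral_indicator_one (μ := μ) hA

lemma cheb_sum {m : ℕ} (A : Fin m → Set Ω) (hA : ∀ i, MeasurableSet (A i))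
    (hind : iIndepFun
      (fun i => (A i).indicator (fun _ => (1:ℝ))) μ)
    (s : Finset (Fin m)) {c : ℝ} (hc : 0 < c) :
    μ {ω | c ≤ |(∑ i ∈ s, (A i).indicator (fun _ => (1:ℝ)) ω) - ∑ i ∈ s, (μ (A i)).toReal|}
      ≤ ENNReal.ofReal ((s.card : ℝ) / c^2) := by
  set X : Fin m → Ω → ℝ := fun i => (A i).indicator (fun _ => (1:ℝ)) with hX
  have hmem : ∀ i, MemLp (X i) 2 μ := fun i =>
    memLp_indicator_const 2 (hA i) 1 (Or.inr (measure_ne_top μ _))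
  have hpair : Set.Pairwise ↑s fun i j => IndepFun (X i) (X j) μ :=
    fun i _ j _ hij => hind.indepFun hij
  have hvar : variance (∑ i ∈ s, X i) μ = ∑ i ∈ s, variance (X i) μ :=
    IndepFun.variance_sum (fun i _ => hmem i) hpair
  have hvarle : variance (∑ i ∈ s, X i) μ ≤ (s.card : ℝ) := by
    rw [hvar]
    calc ∑ i ∈ s, variance (X i) μ ≤ ∑ _i ∈ s, (1:ℝ) :=
      Finset.sum_le_sum (fun i _ => variance_indicator_le_one μ (hA i))
    _ = (s.card : ℝ) := by simp
  have hμS : μ[∑ i ∈ s, X i] = ∑ i ∈ s, (μ (A i)).toReal := by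
    have : μ[∑ i ∈ s, X i] = ∫ ω, ∑ i ∈ s, X i ω ∂μ := by
      congr 1
      funext ω
      simp [Finset.sum_apply]
    rw [this, integral_finset_sum s (fun i _ => (hmem i).integrable one_le_two)]
    exact Finset.sum_congr rfl (fun i _ => integral_indicator_one' μ (hA i))
  have hcheb := meas_ge_le_variance_div_sq (μ := μ)
    (memLp_finset_sum' s (fun i _ => hmem i)) hc
  rw [hμS] at hcheb
  have hsetEq : {ω | c ≤ |(∑ i ∈ s, X i ω) - ∑ i ∈ s, (μ (A i)).toReal|}
      = {ω | c ≤ |(∑ i ∈ s, X i) ω - ∑ i ∈ s, (μ (A i)).toReal|} := by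
    ext ω
    simp [Finset.sum_apply]
  calc μ {ω | c ≤ |(∑ i ∈ s, X i ω) - ∑ i ∈ s, (μ (A i)).toReal|}
      ≤ ENNReal.ofReal (variance (∑ i ∈ s, X i) μ / c^2) := by rw [hsetEq]; exact hcheb
    _ ≤ ENNReal.ofReal ((s.card : ℝ) / c^2) := by
        apply ENNReal.ofReal_le_ofReal
        gcongr

end Stmt13Prob

namespace Stmt13Prob2
open Stmt13 Stmt13Prob

variable {Ω : Type} [MeasurableSpace Ω]

lemma conc_tendsto (μ : Measure Ω) [IsProbabilityMeasure μ]
    (p : (m : ℕ) → Fin m → Ω → ℝ) (hp : ∀ m i, Measurable (p m i))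
    (hindep : ∀ m, iIndepFun (p m) μ)
    (s : (m : ℕ) → Finset (Fin m)) (c : ℝ) (a : ℝ)
    (hmean : Tendsto (fun m : ℕ =>
        (∑ i ∈ s m, (μ {ω | p m i ω = c}).toReal) / m) atTop (nhds a))
    {δ : ℝ} (hδ : 0 < δ) :
    Tendsto (fun m : ℕ =>
        μ {ω | δ ≤ |(((s m).filter (fun i => p m i ω = c)).card : ℝ) / m - a|})
      atTop (nhds 0) := by
  classical
  have hupper : Tendsto (fun m : ℕ => ENNReal.ofReal ((4/δ^2) / m)) atTop (nhds 0) := by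
    have h1 := tendsto_const_div_atTop_nhds_zero_nat (4/δ^2)
    have h2 := ENNReal.tendsto_ofReal h1
    simpa using h2
  apply tendsto_of_tendsto_of_tendsto_of_le_of_le' tendsto_const_nhds hupper
  · exact Eventually.of_forall (fun m => zero_le)
  · have hball : ∀ᶠ m : ℕ in atTop,
        |(∑ i ∈ s m, (μ {ω | p m i ω = c}).toReal) / m - a| < δ/2 := by
      have := hmean.eventually (Metric.ball_mem_nhds a (by positivity : (0:ℝ) < δ/2))
      filter_upwards [this] with m hm
      simpa [Real.dist_eq] using hm
    filter_upwards [hball, eventually_ge_atTop 1] with m hm2 hm1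
    set A : Fin m → Set Ω := fun i => {ω | p m i ω = c} with hA
    have hAmeas : ∀ i, MeasurableSet (A i) := fun i => (hp m i) (measurableSet_singleton c)
    set X : Fin m → Ω → ℝ := fun i => (A i).indicator (fun _ => (1:ℝ)) with hXdef
    have hind : iIndepFun X μ := by
      have hcomp := (hindep m).comp (fun _ => ({c} : Set ℝ).indicator (fun _ => (1:ℝ)))
        (fun _ => (measurable_const).indicator (measurableSet_singleton c))
      have : (fun i => ({c} : Set ℝ).indicator (fun _ => (1:ℝ)) ∘ p m i) = X := by
        funext i ω
        simp only [Function.comp_apply, Set.indicator_apply, Set.mem_singleton_iff, hXdef,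
          Set.mem_setOf_eq, hA]
      rwa [this] at hcomp
    set Mn : ℝ := ∑ i ∈ s m, (μ (A i)).toReal with hMn
    have hmpos : (0:ℝ) < m := by exact_mod_cast Nat.pos_of_ne_zero (by omega)
    have hsub : {ω | δ ≤ |(((s m).filter (fun i => p m i ω = c)).card : ℝ) / m - a|}
        ⊆ {ω | δ/2*m ≤ |(∑ i ∈ s m, X i ω) - Mn|} := by
      intro ω hω
      simp only [Set.mem_setOf_eq] at hω ⊢
      have hcard : (∑ i ∈ s m, X i ω) = (((s m).filter (fun i => p m i ω = c)).card : ℝ) := by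
        rw [Finset.card_filter]
        push_cast
        apply Finset.sum_congr rfl
        intro i _
        simp [hXdef, Set.indicator_apply, hA]
      set T : ℝ := (((s m).filter (fun i => p m i ω = c)).card : ℝ)
      have htri : |T/m - a| ≤ |T/m - Mn/m| + |Mn/m - a| := abs_sub_le _ _ _
      have h3 : δ/2 ≤ |T/m - Mn/m| := by
        linarith [htri, hω, hm2]
      have h4 : T - Mn = m * (T/m - Mn/m) := by field_simp
      rw [hcard, h4, abs_mul, abs_of_pos hmpos]
      calc δ/2*m = m * (δ/2) := by ring
      _ ≤ m * |T/m - Mn/m| := by nlinarith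
    calc μ {ω | δ ≤ |(((s m).filter (fun i => p m i ω = c)).card : ℝ) / m - a|}
        ≤ μ {ω | δ/2*m ≤ |(∑ i ∈ s m, X i ω) - Mn|} := measure_mono hsub
      _ ≤ ENNReal.ofReal (((s m).card : ℝ) / (δ/2*m)^2) :=
          cheb_sum μ A hAmeas hind (s m) (by positivity)
      _ ≤ ENNReal.ofReal ((4/δ^2) / m) := by
          apply ENNReal.ofReal_le_ofReal
          have hcle : ((s m).card : ℝ) ≤ m := by
            exact_mod_cast (Finset.card_le_univ (s m)).trans_eq (by simp)
          have heq : (m:ℝ) / (δ/2*m)^2 = (4/δ^2)/m := by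
            field_simp
            ring
          rw [← heq]
          gcongr
end Stmt13Prob2

namespace Stmt13Glue
open Stmt13 Stmt13Part2 Stmt13Part3

lemma ncard_filter_eq {β : Type*} [Fintype β] (P : β → Prop) [DecidablePred P] :
    {x | P x}.ncard = (Finset.univ.filter P).card := by
  rw [Set.ncard_eq_toFinset_card', Set.toFinset_setOf]

variable {L m : ℕ} {v : Fin m → ℝ} {α : ℝ}

/-- The integrand of `bFDRsl` as a function of the vector of p-values. -/
noncomputable def Ifun (α : ℝ) {m : ℕ} (H0 : Finset (Fin m)) (v : Fin m → ℝ) : ℝ :=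
  if 1 ≤ slR α v then
    ({i : Fin m | i ∈ H0 ∧ v i = slTau α v}.ncard : ℝ)
      / ({i : Fin m | v i = slTau α v}.ncard : ℝ)
  else 0

lemma Ifun_nonneg (H0 : Finset (Fin m)) : 0 ≤ Ifun α H0 v := by
  rw [Ifun]
  split_ifs
  · positivity
  · exact le_refl 0

lemma Ifun_le_one (H0 : Finset (Fin m)) : Ifun α H0 v ≤ 1 := by
  rw [Ifun]
  split_ifs
  · set b := {i : Fin m | v i = slTau α v}.ncard with hb
    set a := {i : Fin m | i ∈ H0 ∧ v i = slTau α v}.ncard with ha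
    have hab : a ≤ b := by
      apply Set.ncard_le_ncard _ (Set.toFinite _)
      intro i hi
      exact hi.2
    rcases Nat.eq_zero_or_pos b with h0 | hpos
    · have : a = 0 := by omega
      simp [this]
    · rw [div_le_one (by exact_mod_cast hpos)]
      exact_mod_cast hab
  · norm_num

/-- On the good event, the integrand equals the ratio of counts at level ℓh. -/
lemma Ifun_eq_ratio (hL : 1 ≤ L) (hv : Grid L v) (hα : 0 < α) (hm : 1 ≤ m)
    (H0 : Finset (Fin m)) {ℓh : ℕ} (hℓh : ℓh ≤ L) (h1 : 1 ≤ ℓh)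
    (h2 : CntF L v (ℓh - 1) < CntF L v ℓh)
    (hmax : ∀ ℓ ≤ L, ℓ ≠ ℓh → gv α L v ℓ < gv α L v ℓh) :
    Ifun α H0 v
      = ((H0.filter (fun i => v i = (ℓh : ℝ)/L)).card : ℝ) / (NlF L v ℓh : ℝ) := by
  classical
  have hr : slR α v = CntF L v ℓh := slR_eq hL hv hα hm hℓh (Or.inr ⟨h1, h2⟩) hmax
  have ht : slTau α v = (ℓh : ℝ)/L := slTau_eq hL hv hα hm hℓh h1 h2 hmax
  rw [Ifun, if_pos (by rw [hr]; omega), ht]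
  congr 1
  · rw [ncard_filter_eq]
    congr 1
    apply congrArg Finset.card
    ext i
    simp [Finset.mem_filter]
  · rw [ncard_filter_eq]
    rfl

/-- On the good event with ℓh = 0, the integrand is 0. -/
lemma Ifun_eq_zero (hL : 1 ≤ L) (hv : Grid L v) (hα : 0 < α) (hm : 1 ≤ m)
    (H0 : Finset (Fin m))
    (hmax : ∀ ℓ ≤ L, ℓ ≠ 0 → gv α L v ℓ < gv α L v 0) :
    Ifun α H0 v = 0 := by
  have hr : slR α v = CntF L v 0 :=
    slR_eq hL hv hα hm (by omega) (Or.inl rfl) hmax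
  rw [Ifun, if_neg]
  rw [hr, Cnt_zero hL hv]
  omega

/-- composition with a finite-range measurable map is measurable -/
lemma measurable_comp_finRange {Ω γ : Type*} [MeasurableSpace Ω] [MeasurableSpace γ]
    [MeasurableSingletonClass γ] {f : Ω → γ} (hf : Measurable f) (S : Finset γ)
    (hS : ∀ ω, f ω ∈ S) (h : γ → ℝ) : Measurable fun ω => h (f ω) := by
  classical
  have heq : (fun ω => h (f ω)) = fun ω => ∑ u ∈ S, if f ω = u then h u else 0 := by
    funext ω
    rw [Finset.sum_ite_eq S (f ω) h, if_pos (hS ω)]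
  rw [heq]
  apply Finset.measurable_sum
  intro u _
  exact Measurable.ite (hf (measurableSet_singleton u)) measurable_const measurable_const

end Stmt13Glue

namespace Stmt13Int
open Stmt13

variable {Ω : Type} [MeasurableSpace Ω]

lemma integral_close (μ : Measure Ω) [IsProbabilityMeasure μ] {Φ : Ω → ℝ}
    (hΦ : Measurable Φ) (h0 : ∀ ω, 0 ≤ Φ ω) (h1 : ∀ ω, Φ ω ≤ 1)
    {bad : Set Ω} (hbad : MeasurableSet bad) {tgt ε : ℝ} (hε : 0 ≤ ε)
    (hgood : ∀ ω ∉ bad, |Φ ω - tgt| ≤ ε) :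
    |(∫ ω, Φ ω ∂μ) - tgt| ≤ ε + (1 + |tgt|) * (μ bad).toReal := by
  have hint : Integrable Φ μ := by
    apply Integrable.mono' (integrable_const (1:ℝ)) hΦ.aestronglyMeasurable
    apply Eventually.of_forall
    intro ω
    rw [Real.norm_eq_abs, abs_le]
    exact ⟨by linarith [h0 ω], h1 ω⟩
  have hintsub : Integrable (fun ω => Φ ω - tgt) μ := hint.sub (integrable_const tgt)
  have hindint : Integrable (bad.indicator (fun _ => (1:ℝ))) μ :=
    (integrable_const (1:ℝ)).indicator hbad
  have hRHSint : Integrable (fun ω => ε + (1 + |tgt|) * bad.indicator (fun _ => (1:ℝ)) ω) μ :=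
    (integrable_const ε).add (hindint.const_mul _)
  have hptwise : ∀ ω, |Φ ω - tgt| ≤ ε + (1 + |tgt|) * bad.indicator (fun _ => (1:ℝ)) ω := by
    intro ω
    by_cases hω : ω ∈ bad
    · rw [Set.indicator_of_mem hω]
      have : |Φ ω - tgt| ≤ |Φ ω| + |tgt| := abs_sub _ _
      have h2 : |Φ ω| ≤ 1 := by rw [abs_le]; exact ⟨by linarith [h0 ω], h1 ω⟩
      nlinarith
    · rw [Set.indicator_of_notMem hω]
      simpa using hgood ω hω
  have step1 : |(∫ ω, Φ ω ∂μ) - tgt| = |∫ ω, (Φ ω - tgt) ∂μ| := by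
    rw [integral_sub hint (integrable_const tgt), integral_const]
    simp
  rw [step1]
  calc |∫ ω, (Φ ω - tgt) ∂μ| ≤ ∫ ω, |Φ ω - tgt| ∂μ := by
        simpa [Real.norm_eq_abs] using norm_integral_le_integral_norm (fun ω => Φ ω - tgt) (μ := μ)
    _ ≤ ∫ ω, (ε + (1 + |tgt|) * bad.indicator (fun _ => (1:ℝ)) ω) ∂μ :=
        integral_mono hintsub.abs hRHSint hptwise
    _ = ε + (1 + |tgt|) * (μ bad).toReal := by
        rw [integral_add (integrable_const ε) (hindint.const_mul _), integral_const,
          integral_const_mul]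
        simp [Stmt13Prob.integral_indicator_one' μ hbad]

lemma measurable_cardfilter {m : ℕ} (p : Fin m → Ω → ℝ) (hp : ∀ i, Measurable (p i))
    (s : Finset (Fin m)) (c : ℝ) :
    Measurable (fun ω => ((s.filter (fun i => p i ω = c)).card : ℝ)) := by
  classical
  have heq : (fun ω => ((s.filter (fun i => p i ω = c)).card : ℝ))
      = fun ω => ∑ i ∈ s, if p i ω = c then (1:ℝ) else 0 := by
    funext ω
    rw [Finset.card_filter]
    push_cast
    rfl
  rw [heq]
  apply Finset.measurable_sum
  intro i _
  exact Measurable.ite ((hp i) (measurableSet_singleton c)) measurable_const measurable_const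

end Stmt13Int


open Stmt13 Stmt13Part2 Stmt13Part3 Stmt13Part4 Stmt13Prob Stmt13Prob2 Stmt13Glue Stmt13Int

/-- Fixed grid size `L`, `m → ∞`.  For a triangular array of independent
grid-supported p-values whose nulls are uniform on `{1/L, ..., L/L}`, if the average pmf
converges pointwise to `f*`, the null proportion converges to `π₀* ∈ (0,1)`, and the
population support-line objective has a unique maximizer `ℓ*` over `{0, ..., L}`, then
the boundary FDR of the support-line procedure (ties broken uniformly at random)
converges to `π₀* / (L f*(ℓ*/L)) · 1{ℓ* > 0}`. -/
theorem stmt13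
    {Ω : Type} [MeasurableSpace Ω] (μ : Measure Ω) [IsProbabilityMeasure μ]
    (L : ℕ) (hL : 1 ≤ L) (α : ℝ) (hα : α ∈ Ioo (0 : ℝ) 1)
    (p : (m : ℕ) → Fin m → Ω → ℝ) (hp : ∀ m i, Measurable (p m i))
    (H0 : (m : ℕ) → Finset (Fin m))
    (hsupp : ∀ m i ω, ∃ ℓ : ℕ, 1 ≤ ℓ ∧ ℓ ≤ L ∧ p m i ω = (ℓ : ℝ) / L)
    (hindep : ∀ m, iIndepFun (p m) μ)
    (hnull : ∀ m, ∀ i ∈ H0 m, ∀ ℓ : ℕ, 1 ≤ ℓ → ℓ ≤ L →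
      μ {ω | p m i ω = (ℓ : ℝ) / L} = (L : ENNReal)⁻¹)
    (fstar : ℝ → ℝ) (hfstarNonneg : ∀ x, 0 ≤ fstar x)
    (hfstarPmf : ∑ ℓ ∈ Finset.Icc 1 L, fstar ((ℓ : ℝ) / L) = 1)
    (hconv : ∀ ℓ : ℕ, 1 ≤ ℓ → ℓ ≤ L →
      Tendsto (fun m : ℕ =>
          (∑ i : Fin m, (μ {ω | p m i ω = (ℓ : ℝ) / L}).toReal) / (m : ℝ))
        atTop (nhds (fstar ((ℓ : ℝ) / L))))
    (π0star : ℝ) (hπ0 : π0star ∈ Ioo (0 : ℝ) 1)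
    (hπ0conv : Tendsto (fun m : ℕ => ((H0 m).card : ℝ) / m) atTop (nhds π0star))
    (ℓstar : ℕ) (hℓstarLe : ℓstar ≤ L)
    (hℓstarMax : ∀ ℓ : ℕ, ℓ ≤ L → ℓ ≠ ℓstar →
      α * ∑ k ∈ Finset.Icc 1 ℓ, fstar ((k : ℝ) / L) - (ℓ : ℝ) / L
        < α * ∑ k ∈ Finset.Icc 1 ℓstar, fstar ((k : ℝ) / L) - (ℓstar : ℝ) / L) :
    Tendsto (fun m : ℕ => bFDRsl μ (p m) (H0 m) α) atTop
      (nhds (if 0 < ℓstar then π0star / ((L : ℝ) * fstar ((ℓstar : ℝ) / L)) else 0)) := by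
  classical
  obtain ⟨hα0, hα1⟩ := hα
  obtain ⟨hπ0a, hπ0b⟩ := hπ0
  have hLpos : (0:ℝ) < L := by exact_mod_cast Nat.pos_of_ne_zero (by omega)
  set G : ℕ → ℝ := fun ℓ => α * ∑ k ∈ Finset.Icc 1 ℓ, fstar ((k:ℝ)/L) - (ℓ:ℝ)/L with hGdef
  have hGmax : ∀ ℓ ≤ L, ℓ ≠ ℓstar → G ℓ < G ℓstar := fun ℓ h1 h2 => hℓstarMax ℓ h1 h2
  have hsne : ((Finset.range (L+1)).erase ℓstar).Nonempty := by
    rcases Nat.eq_zero_or_pos ℓstar with h | h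
    · exact ⟨1, Finset.mem_erase.2 ⟨by omega, Finset.mem_range.2 (by omega)⟩⟩
    · exact ⟨0, Finset.mem_erase.2 ⟨by omega, Finset.mem_range.2 (by omega)⟩⟩
  set gap : ℝ := ((Finset.range (L+1)).erase ℓstar).inf' hsne (fun ℓ => G ℓstar - G ℓ)
    with hgapdef
  have hgap_pos : 0 < gap := by
    rw [hgapdef, Finset.lt_inf'_iff]
    intro ℓ hℓ
    rw [Finset.mem_erase, Finset.mem_range] at hℓ
    have := hGmax ℓ (by omega) hℓ.1
    linarith
  have hgap_le : ∀ ℓ ≤ L, ℓ ≠ ℓstar → gap ≤ G ℓstar - G ℓ := by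
    intro ℓ h1 h2
    exact Finset.inf'_le _ (Finset.mem_erase.2 ⟨h2, Finset.mem_range.2 (by omega)⟩)
  -- the bFDR integrand, as a function of ω
  have hbFDR : ∀ mm : ℕ, bFDRsl μ (p mm) (H0 mm) α
      = ∫ ω, Ifun α (H0 mm) (fun i => p mm i ω) ∂μ := fun mm => rfl
  have hmeasΦ : ∀ mm : ℕ, Measurable (fun ω => Ifun α (H0 mm) (fun i => p mm i ω)) := by
    intro mm
    apply measurable_comp_finRange (f := fun ω (i : Fin mm) => p mm i ω)
      (measurable_pi_lambda _ (fun i => hp mm i))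
      (Fintype.piFinset (fun _ : Fin mm => (Finset.Icc 1 L).image (fun ℓ : ℕ => (ℓ:ℝ)/L)))
    intro ω
    rw [Fintype.mem_piFinset]
    intro i
    obtain ⟨ℓ, h1, h2, h3⟩ := hsupp mm i ω
    exact Finset.mem_image.2 ⟨ℓ, Finset.mem_Icc.2 ⟨h1, h2⟩, h3.symm⟩
  rcases Nat.eq_zero_or_pos ℓstar with hℓ0 | hℓpos
  · -- case ℓstar = 0
    subst hℓ0
    rw [if_neg (by omega)]
    rw [Metric.tendsto_atTop]
    intro ε hε
    set δ : ℝ := gap / (4 * (α * (L:ℝ))) with hδdef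
    have hδpos : 0 < δ := by
      rw [hδdef]; positivity
    have hδgap : 2*(α*((L:ℝ)*δ)) < gap := by
      have h2 : 2*(α*((L:ℝ)*δ)) = gap/2 := by
        rw [hδdef]
        field_simp
        ring
      linarith
    set badL : ℕ → ℕ → Set Ω := fun ℓ mm =>
      {ω | δ ≤ |((Finset.univ.filter (fun i => p mm i ω = (ℓ:ℝ)/L)).card : ℝ)/mm
        - fstar ((ℓ:ℝ)/L)|} with hbadLdef
    set bad : ℕ → Set Ω := fun mm => ⋃ ℓ ∈ Finset.Icc 1 L, badL ℓ mm with hbaddef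
    have hbadmeas : ∀ mm, MeasurableSet (bad mm) := by
      intro mm
      apply MeasurableSet.biUnion (Finset.Icc 1 L).countable_toSet
      intro ℓ _
      exact measurableSet_le measurable_const
        ((((measurable_cardfilter (p mm) (hp mm) Finset.univ ((ℓ:ℝ)/L)).div_const
          (mm:ℝ)).sub measurable_const).abs)
    have htendL : ∀ ℓ ∈ Finset.Icc 1 L, Tendsto (fun mm => μ (badL ℓ mm)) atTop (nhds 0) := by
      intro ℓ hℓ
      rw [Finset.mem_Icc] at hℓ
      exact conc_tendsto μ p hp hindep (fun mm => Finset.univ) ((ℓ:ℝ)/L)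
        (fstar ((ℓ:ℝ)/L)) (hconv ℓ hℓ.1 hℓ.2) hδpos
    have htend : Tendsto (fun mm => μ (bad mm)) atTop (nhds 0) := by
      have hsum : Tendsto (fun mm => ∑ ℓ ∈ Finset.Icc 1 L, μ (badL ℓ mm)) atTop (nhds 0) := by
        have := tendsto_finset_sum (Finset.Icc 1 L) htendL
        simpa using this
      apply tendsto_of_tendsto_of_tendsto_of_le_of_le' tendsto_const_nhds hsum
      · exact Eventually.of_forall (fun mm => zero_le)
      · exact Eventually.of_forall (fun mm => measure_biUnion_finset_le _ _)
    have hev := (ENNReal.tendsto_nhds_zero.1 htend) (ENNReal.ofReal (ε/2))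
      (ENNReal.ofReal_pos.2 (by linarith))
    have hfinal : ∀ᶠ mm : ℕ in atTop, dist (bFDRsl μ (p mm) (H0 mm) α) 0 < ε := by
      filter_upwards [hev, eventually_ge_atTop 1] with mm hbadle hm1
      have hgood : ∀ ω ∉ bad mm, |Ifun α (H0 mm) (fun i => p mm i ω) - 0| ≤ 0 := by
        intro ω hω
        have hv : Grid L (fun i => p mm i ω) := fun i => hsupp mm i ω
        have hdev : ∀ ℓ : ℕ, 1 ≤ ℓ → ℓ ≤ L →
            |(NlF L (fun i => p mm i ω) ℓ : ℝ)/mm - fstar ((ℓ:ℝ)/L)| < δ := by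
          intro ℓ h1 h2
          by_contra hcon
          push_neg at hcon
          exact hω (Set.mem_biUnion (Finset.mem_coe.2 (Finset.mem_Icc.2 ⟨h1, h2⟩)) hcon)
        have hclose := Cnt_close hL hv hδpos.le hdev
        have hmax : ∀ ℓ ≤ L, ℓ ≠ 0 →
            gv α L (fun i => p mm i ω) ℓ < gv α L (fun i => p mm i ω) 0 := by
          intro ℓ hℓL hne
          refine gv_lt_of_close (s := fun ℓ => ∑ k ∈ Finset.Icc 1 ℓ, fstar ((k:ℝ)/L))
            hα0 (hclose ℓ hℓL) (hclose 0 (by omega)) ?_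
          have hle := hgap_le ℓ hℓL hne
          simp only [hGdef] at hle
          push_cast at hle ⊢
          linarith
        rw [Ifun_eq_zero hL hv hα0 hm1 (H0 mm) hmax]
        simp
      have hbound := integral_close μ (hmeasΦ mm) (fun ω => Ifun_nonneg _)
        (fun ω => Ifun_le_one _) (hbadmeas mm) le_rfl hgood
      have htoReal : (μ (bad mm)).toReal ≤ ε/2 := by
        calc (μ (bad mm)).toReal ≤ (ENNReal.ofReal (ε/2)).toReal :=
          ENNReal.toReal_mono ENNReal.ofReal_ne_top hbadle
        _ = ε/2 := ENNReal.toReal_ofReal (by linarith)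
      rw [Real.dist_eq, hbFDR mm]
      have : |(∫ ω, Ifun α (H0 mm) (fun i => p mm i ω) ∂μ) - 0|
          ≤ 0 + (1 + |(0:ℝ)|) * (μ (bad mm)).toReal := hbound
      simp only [abs_zero, add_zero, zero_add, sub_zero] at this ⊢
      have hb2 : |∫ ω, Ifun α (H0 mm) (fun i => p mm i ω) ∂μ| ≤ (μ (bad mm)).toReal := by
        simpa using this
      linarith
    obtain ⟨N, hN⟩ := eventually_atTop.1 hfinal
    exact ⟨N, hN⟩
  · -- case 1 ≤ ℓstar
    obtain ⟨n, rfl⟩ : ∃ n, ℓstar = n + 1 := ⟨ℓstar - 1, by omega⟩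
    rw [if_pos hℓpos]
    set fs : ℝ := fstar (((n+1:ℕ):ℝ)/L) with hfsdef
    set q : ℝ := π0star / L with hqdef
    have hsplit : ∑ k ∈ Finset.Icc 1 (n+1), fstar ((k:ℝ)/L)
        = ∑ k ∈ Finset.Icc 1 n, fstar ((k:ℝ)/L) + fs := by
      rw [Finset.sum_Icc_succ_top (by omega)]
    have hGlt := hGmax n (by omega) (by omega)
    have hfsgt : 1/(L:ℝ) < α * fs := by
      simp only [hGdef] at hGlt
      rw [hsplit] at hGlt
      push_cast at hGlt
      have hstep : ((n:ℝ)+1)/L - (n:ℝ)/L = 1/L := by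
        field_simp
        ring
      have hexp : α * (∑ k ∈ Finset.Icc 1 n, fstar ((k:ℝ)/L) + fs)
          = α * ∑ k ∈ Finset.Icc 1 n, fstar ((k:ℝ)/L) + α * fs := by ring
      linarith
    have hfs_pos : 0 < fs := by
      have h1L : 0 < 1/(L:ℝ) := by positivity
      nlinarith
    have htgt : π0star / ((L:ℝ) * fs) = q / fs := by rw [hqdef, div_div]
    have hq_pos : 0 < q := by rw [hqdef]; positivity
    have hcont : ContinuousAt (fun x : ℝ × ℝ => x.1 / x.2) (q, fs) :=
      ContinuousAt.div continuousAt_fst continuousAt_snd (by simpa using ne_of_gt hfs_pos)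
    rw [Metric.tendsto_atTop]
    intro ε hε
    obtain ⟨δ₃, hδ₃pos, hδ₃⟩ := Metric.continuousAt_iff.1 hcont (ε/2) (by linarith)
    set δ : ℝ := min (min (gap/(4*(α*L))) (fs/2)) δ₃ with hδdef
    have hδpos : 0 < δ := lt_min (lt_min (by positivity) (by positivity)) hδ₃pos
    have hδgap : 2*(α*((L:ℝ)*δ)) < gap := by
      have hd1 : δ ≤ gap/(4*(α*L)) := le_trans (min_le_left _ _) (min_le_left _ _)
      have h2 : 2*(α*((L:ℝ)*δ)) ≤ 2*(α*((L:ℝ)*(gap/(4*(α*L))))) := by gcongr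
      have h3 : 2*(α*((L:ℝ)*(gap/(4*(α*L))))) = gap/2 := by
        field_simp
        ring
      linarith
    have hδfs : δ ≤ fs/2 := le_trans (min_le_left _ _) (min_le_right _ _)
    have hδ3 : δ ≤ δ₃ := min_le_right _ _
    set badL : ℕ → ℕ → Set Ω := fun ℓ mm =>
      {ω | δ ≤ |((Finset.univ.filter (fun i => p mm i ω = (ℓ:ℝ)/L)).card : ℝ)/mm
        - fstar ((ℓ:ℝ)/L)|} with hbadLdef
    set badN : ℕ → Set Ω := fun mm =>
      {ω | δ ≤ |(((H0 mm).filter (fun i => p mm i ω = ((n+1:ℕ):ℝ)/L)).card : ℝ)/mm - q|}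
      with hbadNdef
    set bad : ℕ → Set Ω := fun mm => (⋃ ℓ ∈ Finset.Icc 1 L, badL ℓ mm) ∪ badN mm
      with hbaddef
    have hbadmeas : ∀ mm, MeasurableSet (bad mm) := by
      intro mm
      apply MeasurableSet.union
      · apply MeasurableSet.biUnion (Finset.Icc 1 L).countable_toSet
        intro ℓ _
        exact measurableSet_le measurable_const
          ((((measurable_cardfilter (p mm) (hp mm) Finset.univ ((ℓ:ℝ)/L)).div_const
            (mm:ℝ)).sub measurable_const).abs)
      · exact measurableSet_le measurable_const
          ((((measurable_cardfilter (p mm) (hp mm) (H0 mm) (((n+1:ℕ):ℝ)/L)).div_const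
            (mm:ℝ)).sub measurable_const).abs)
    have htendL : ∀ ℓ ∈ Finset.Icc 1 L, Tendsto (fun mm => μ (badL ℓ mm)) atTop (nhds 0) := by
      intro ℓ hℓ
      rw [Finset.mem_Icc] at hℓ
      exact conc_tendsto μ p hp hindep (fun mm => Finset.univ) ((ℓ:ℝ)/L)
        (fstar ((ℓ:ℝ)/L)) (hconv ℓ hℓ.1 hℓ.2) hδpos
    have htendN : Tendsto (fun mm => μ (badN mm)) atTop (nhds 0) := by
      apply conc_tendsto μ p hp hindep (fun mm => H0 mm) (((n+1:ℕ):ℝ)/L) q ?_ hδpos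
      have hterm : ∀ mm : ℕ, (∑ i ∈ H0 mm, (μ {ω | p mm i ω = ((n+1:ℕ):ℝ)/L}).toReal)
          = ((H0 mm).card : ℝ) * (L:ℝ)⁻¹ := by
        intro mm
        rw [Finset.sum_congr rfl (fun i hi => by
          rw [hnull mm i hi (n+1) (by omega) hℓstarLe, ENNReal.toReal_inv,
            ENNReal.toReal_natCast]), Finset.sum_const, nsmul_eq_mul]
      have heq2 : (fun mm : ℕ =>
            (∑ i ∈ H0 mm, (μ {ω | p mm i ω = ((n+1:ℕ):ℝ)/L}).toReal)/(mm:ℝ))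
          = fun mm : ℕ => (((H0 mm).card : ℝ)/mm) * (L:ℝ)⁻¹ := by
        funext mm
        rw [hterm mm, mul_div_right_comm]
      rw [heq2, hqdef, div_eq_mul_inv]
      exact hπ0conv.mul_const _
    have htend : Tendsto (fun mm => μ (bad mm)) atTop (nhds 0) := by
      have hsum : Tendsto
          (fun mm => (∑ ℓ ∈ Finset.Icc 1 L, μ (badL ℓ mm)) + μ (badN mm)) atTop (nhds 0) := by
        have h1 := tendsto_finset_sum (Finset.Icc 1 L) htendL
        have := h1.add htendN
        simpa using this
      apply tendsto_of_tendsto_of_tendsto_of_le_of_le' tendsto_const_nhds hsum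
      · exact Eventually.of_forall (fun mm => zero_le)
      · apply Eventually.of_forall (fun mm => ?_)
        calc μ (bad mm) ≤ μ (⋃ ℓ ∈ Finset.Icc 1 L, badL ℓ mm) + μ (badN mm) :=
              measure_union_le _ _
          _ ≤ (∑ ℓ ∈ Finset.Icc 1 L, μ (badL ℓ mm)) + μ (badN mm) :=
              add_le_add (measure_biUnion_finset_le _ _) le_rfl
    have hBpos : (0:ℝ) < 1 + |q/fs| := by positivity
    set η : ℝ := ε/(4*(1 + |q/fs|)) with hηdef
    have hηpos : 0 < η := by rw [hηdef]; positivity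
    have hev := (ENNReal.tendsto_nhds_zero.1 htend) (ENNReal.ofReal η)
      (ENNReal.ofReal_pos.2 hηpos)
    have hfinal : ∀ᶠ mm : ℕ in atTop,
        dist (bFDRsl μ (p mm) (H0 mm) α) (π0star / ((L:ℝ) * fs)) < ε := by
      filter_upwards [hev, eventually_ge_atTop 1] with mm hbadle hm1
      have hmmpos : (0:ℝ) < mm := by exact_mod_cast Nat.pos_of_ne_zero (by omega)
      have hgood : ∀ ω ∉ bad mm,
          |Ifun α (H0 mm) (fun i => p mm i ω) - q/fs| ≤ ε/2 := by
        intro ω hω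
        rw [hbaddef] at hω
        simp only [Set.mem_union, not_or] at hω
        obtain ⟨hωL, hωN⟩ := hω
        have hv : Grid L (fun i => p mm i ω) := fun i => hsupp mm i ω
        have hdev : ∀ ℓ : ℕ, 1 ≤ ℓ → ℓ ≤ L →
            |(NlF L (fun i => p mm i ω) ℓ : ℝ)/mm - fstar ((ℓ:ℝ)/L)| < δ := by
          intro ℓ h1 h2
          by_contra hcon
          push_neg at hcon
          exact hωL (Set.mem_biUnion (Finset.mem_coe.2 (Finset.mem_Icc.2 ⟨h1, h2⟩)) hcon)
        have hclose := Cnt_close hL hv hδpos.le hdev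
        have hmax : ∀ ℓ ≤ L, ℓ ≠ n+1 →
            gv α L (fun i => p mm i ω) ℓ < gv α L (fun i => p mm i ω) (n+1) := by
          intro ℓ hℓL hne
          refine gv_lt_of_close (s := fun ℓ => ∑ k ∈ Finset.Icc 1 ℓ, fstar ((k:ℝ)/L))
            hα0 (hclose ℓ hℓL) (hclose (n+1) hℓstarLe) ?_
          have hle := hgap_le ℓ hℓL hne
          simp only [hGdef] at hle
          push_cast at hle ⊢
          linarith
        have hd := hdev (n+1) (by omega) hℓstarLe
        rw [← hfsdef] at hd
        have hNl1 : 1 ≤ NlF L (fun i => p mm i ω) (n+1) := by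
          rcases Nat.eq_zero_or_pos (NlF L (fun i => p mm i ω) (n+1)) with h0 | h
          · exfalso
            rw [h0] at hd
            push_cast at hd
            rw [zero_div, zero_sub, abs_neg, abs_of_pos hfs_pos] at hd
            linarith
          · omega
        have hCnt : CntF L (fun i => p mm i ω) ((n+1)-1) < CntF L (fun i => p mm i ω) (n+1) := by
          have he : (n+1)-1 = n := by omega
          rw [he, Cnt_succ hL hv n]
          omega
        have hΦeq := Ifun_eq_ratio hL hv hα0 hm1 (H0 mm) hℓstarLe (by omega) hCnt hmax
        rw [hΦeq]
        have hy : |(NlF L (fun i => p mm i ω) (n+1) : ℝ)/mm - fs| < δ := hd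
        have hx : |(((H0 mm).filter
            (fun i => p mm i ω = ((n+1:ℕ):ℝ)/L)).card : ℝ)/mm - q| < δ := by
          by_contra hcon
          push_neg at hcon
          exact hωN hcon
        set a : ℝ := (((H0 mm).filter (fun i => p mm i ω = ((n+1:ℕ):ℝ)/L)).card : ℝ)
          with hadef
        set b : ℝ := (NlF L (fun i => p mm i ω) (n+1) : ℝ) with hbdef
        have hb0 : b ≠ 0 := by
          rw [hbdef]
          have : (1:ℝ) ≤ (NlF L (fun i => p mm i ω) (n+1) : ℝ) := by exact_mod_cast hNl1
          linarith
        have hxy : (a/mm)/(b/mm) = a/b := by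
          rw [div_div_div_cancel_right₀]
          exact ne_of_gt hmmpos
        have hdist : dist ((a/mm, b/mm) : ℝ × ℝ) ((q, fs) : ℝ × ℝ) < δ₃ := by
          rw [Prod.dist_eq]
          apply max_lt
          · rw [Real.dist_eq]
            exact lt_of_lt_of_le hx hδ3
          · rw [Real.dist_eq]
            exact lt_of_lt_of_le hy hδ3
        have hratio := hδ₃ hdist
        dsimp only at hratio
        rw [Real.dist_eq, hxy] at hratio
        have hnum : ((H0 mm).filter
            (fun i => (fun i => p mm i ω) i = ((n+1:ℕ):ℝ)/L)).card
            = ((H0 mm).filter (fun i => p mm i ω = ((n+1:ℕ):ℝ)/L)).card := rfl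
        calc |(((H0 mm).filter (fun i => p mm i ω = ((n+1:ℕ):ℝ)/L)).card : ℝ)
              / (NlF L (fun i => p mm i ω) (n+1) : ℝ) - q/fs|
            = |a/b - q/fs| := rfl
          _ ≤ ε/2 := le_of_lt hratio
      have hbound := integral_close μ (hmeasΦ mm) (fun ω => Ifun_nonneg _)
        (fun ω => Ifun_le_one _) (hbadmeas mm) (by linarith : (0:ℝ) ≤ ε/2) hgood
      have htoReal : (μ (bad mm)).toReal ≤ η := by
        calc (μ (bad mm)).toReal ≤ (ENNReal.ofReal η).toReal :=
          ENNReal.toReal_mono ENNReal.ofReal_ne_top hbadle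
        _ = η := ENNReal.toReal_ofReal hηpos.le
      rw [Real.dist_eq, hbFDR mm, htgt]
      have hBη : (1 + |q/fs|) * η ≤ ε/4 := by
        rw [hηdef]
        have hB0 : (1 + |q/fs|) ≠ 0 := ne_of_gt hBpos
        have heq4 : (1 + |q/fs|) * (ε/(4*(1 + |q/fs|))) = ε/4 := by
          field_simp
        linarith
      have hmul : (1 + |q/fs|) * (μ (bad mm)).toReal ≤ (1 + |q/fs|) * η :=
        mul_le_mul_of_nonneg_left htoReal hBpos.le
      calc |(∫ ω, Ifun α (H0 mm) (fun i => p mm i ω) ∂μ) - q/fs|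
          ≤ ε/2 + (1 + |q/fs|) * (μ (bad mm)).toReal := hbound
        _ ≤ ε/2 + (1 + |q/fs|) * η := by linarith
        _ ≤ ε/2 + ε/4 := by linarith
        _ < ε := by linarith
    obtain ⟨N, hN⟩ := eventually_atTop.1 hfinal
    exact ⟨N, hN⟩
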